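/- Let Ω ⊂ ℝᵈ be open and bounded, u_a, u_b ∈ L^∞(Ω) with u_a < u_b a.e., and let C_ad = {u ∈ L^p(Ω) : u_a ≤ u ≤ u_b a.e.} for p ≥ 2. Let ū ∈ C_ad and Ω_{a,b} = {x : ū(x) = u_a(x) or ū(x) = u_b(x)}. Then the contingent cone T_{C_ad}(ū) = {h ∈ L^p(Ω) : ∃ tₙ ↓ 0, hₙ → h in L^p, ū + tₙhₙ ∈ C_ad ∀n} is dense in L²(Ω) if and only if Ω_{a,b} has Lebesgue measure zero. -/

import Mathlib

open MeasureTheory Filter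
open scoped ENNReal

/-- For the box-constraint set `C_ad = {u ∈ L^p(Ω) : u_a ≤ u ≤ u_b a.e.}`
with `u_a, u_b ∈ L^∞(Ω)`, `u_a < u_b` a.e., and `ū ∈ C_ad`, the contingent cone
`T_{C_ad}(ū)` is dense in `L²(Ω)` if and only if the active set
`Ω_{a,b} = {x : ū(x) = u_a(x) or ū(x) = u_b(x)}` has measure zero. -/
theorem stmt_14 {d : ℕ}
    (Ω : Set (Fin d → ℝ)) (hΩo : IsOpen Ω) (hΩb : Bornology.IsBounded Ω)
    (μ : Measure (Fin d → ℝ)) (hμ : μ = volume.restrict Ω)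
    (p : ℝ) (hp : 2 ≤ p)
    (ua ub ubar : (Fin d → ℝ) → ℝ)
    (hua : MemLp ua ⊤ μ) (hub : MemLp ub ⊤ μ)
    (hab : ∀ᵐ x ∂μ, ua x < ub x)
    (hubar_mem : MemLp ubar (ENNReal.ofReal p) μ)
    (hubar_box : ∀ᵐ x ∂μ, ua x ≤ ubar x ∧ ubar x ≤ ub x) :
    -- the contingent cone T_{C_ad}(ū) (as a set of L^p functions) is dense in L²(Ω) ...
    ((∀ g : (Fin d → ℝ) → ℝ, MemLp g 2 μ → ∀ δ : ℝ, 0 < δ →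
        ∃ h : (Fin d → ℝ) → ℝ,
          (MemLp h (ENNReal.ofReal p) μ ∧
            ∃ t : ℕ → ℝ, ∃ hs : ℕ → (Fin d → ℝ) → ℝ,
              (∀ n, 0 < t n) ∧ Tendsto t atTop (nhds 0) ∧
              Tendsto (fun n => eLpNorm (hs n - h) (ENNReal.ofReal p) μ) atTop (nhds 0) ∧
              ∀ n, MemLp (fun x => ubar x + t n * hs n x) (ENNReal.ofReal p) μ ∧
                ∀ᵐ x ∂μ, ua x ≤ ubar x + t n * hs n x ∧ ubar x + t n * hs n x ≤ ub x) ∧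
          eLpNorm (h - g) 2 μ < ENNReal.ofReal δ)
    -- ... if and only if the active set has Lebesgue measure zero
    ↔ μ {x | ubar x = ua x ∨ ubar x = ub x} = 0) := by
  have hq0 : (ENNReal.ofReal p) ≠ 0 := by
    simp only [ne_eq, ENNReal.ofReal_eq_zero, not_le]; linarith
  have hfin : IsFiniteMeasure μ := by
    constructor
    rw [hμ, Measure.restrict_apply_univ]
    exact hΩb.measure_lt_top
  obtain ⟨fa, hfa_sm, hfa_eq⟩ := hua.1
  obtain ⟨fb, hfb_sm, hfb_eq⟩ := hub.1
  obtain ⟨fu, hfu_sm, hfu_eq⟩ := hubar_mem.1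
  constructor
  · -- density ⇒ active set is null
    intro hdense
    by_contra hA0
    set A := {x | ubar x = ua x ∨ ubar x = ub x} with hAdef
    set Aa := {x | fu x = fa x} with hAadef
    set Ab := {x | fu x = fb x} with hAbdef
    have hAa_meas : MeasurableSet Aa :=
      measurableSet_eq_fun hfu_sm.measurable hfa_sm.measurable
    have hAb_meas : MeasurableSet Ab :=
      measurableSet_eq_fun hfu_sm.measurable hfb_sm.measurable
    have hAeq : μ (Aa ∪ Ab) = μ A := by
      apply measure_congr
      filter_upwards [hfa_eq, hfb_eq, hfu_eq] with x h1 h2 h3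
      have : (x ∈ Aa ∪ Ab) = (x ∈ A) := by
        simp only [Set.mem_union, hAadef, hAbdef, hAdef, Set.mem_setOf_eq, eq_iff_iff]
        rw [← h1, ← h2, ← h3]
      exact this
    set g : (Fin d → ℝ) → ℝ :=
      fun x => Set.indicator Ab (fun _ => (1:ℝ)) x - Set.indicator Aa (fun _ => (1:ℝ)) x
      with hgdef
    have hg_meas : AEStronglyMeasurable g μ := by
      apply Measurable.aestronglyMeasurable
      exact (measurable_const.indicator hAb_meas).sub (measurable_const.indicator hAa_meas)
    have hg_mem : MemLp g 2 μ := by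
      refine MemLp.of_bound hg_meas 2 (ae_of_all _ fun x => ?_)
      simp only [hgdef, Real.norm_eq_abs]
      have h1 : |Set.indicator Ab (fun _ => (1:ℝ)) x| ≤ 1 := by
        by_cases hx : x ∈ Ab <;> simp [Set.indicator_of_mem, Set.indicator_of_notMem, hx]
      have h2 : |Set.indicator Aa (fun _ => (1:ℝ)) x| ≤ 1 := by
        by_cases hx : x ∈ Aa <;> simp [Set.indicator_of_mem, Set.indicator_of_notMem, hx]
      calc |Set.indicator Ab (fun _ => (1:ℝ)) x - Set.indicator Aa (fun _ => (1:ℝ)) x|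
          ≤ |Set.indicator Ab (fun _ => (1:ℝ)) x| + |Set.indicator Aa (fun _ => (1:ℝ)) x| :=
            abs_sub _ _
        _ ≤ 2 := by linarith
    set δ : ℝ := min 1 (μ A).toReal with hδdef
    have hδpos : 0 < δ :=
      lt_min one_pos (ENNReal.toReal_pos hA0 (measure_ne_top μ A))
    obtain ⟨h, ⟨hh_mem, t, hs, ht_pos, ht_lim, hs_lim, hbox⟩, hclose⟩ := hdense g hg_mem δ hδpos
    -- each hs n is a.e. strongly measurable
    have hhs_meas : ∀ n, AEStronglyMeasurable (hs n) μ := by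
      intro n
      have h1 : MemLp (fun x => (t n)⁻¹ * ((fun x => ubar x + t n * hs n x) x - ubar x))
          (ENNReal.ofReal p) μ := ((hbox n).1.sub hubar_mem).const_mul _
      have h2 : (fun x => (t n)⁻¹ * ((fun x => ubar x + t n * hs n x) x - ubar x)) = hs n := by
        funext x
        simp only [add_sub_cancel_left]
        rw [inv_mul_cancel_left₀ (ht_pos n).ne']
      rw [h2] at h1
      exact h1.1
    have htim : TendstoInMeasure μ hs atTop h :=
      tendstoInMeasure_of_tendsto_eLpNorm hq0 hhs_meas hh_mem.1 hs_lim
    obtain ⟨ns, hns_mono, hns_ae⟩ := htim.exists_seq_tendsto_ae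
    have hae_all : ∀ᵐ x ∂μ, ∀ n, ua x ≤ ubar x + t n * hs n x ∧ ubar x + t n * hs n x ≤ ub x :=
      ae_all_iff.2 fun n => (hbox n).2
    have key : ∀ᵐ x ∂μ, (x ∈ Aa → 0 ≤ h x) ∧ (x ∈ Ab → h x ≤ 0) ∧ ¬(x ∈ Aa ∧ x ∈ Ab) := by
      filter_upwards [hae_all, hns_ae, hfa_eq, hfb_eq, hfu_eq, hab] with x hx hlim h1 h2 h3 h4
      refine ⟨?_, ?_, ?_⟩
      · intro hxa
        have hxa' : ubar x = ua x := by
          rw [h3, h1]; exact hxa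
        have hnn : ∀ i, (0:ℝ) ≤ hs (ns i) x := by
          intro i
          have h5 := (hx (ns i)).1
          rw [hxa'] at h5
          by_contra hcon
          push_neg at hcon
          nlinarith [ht_pos (ns i)]
        exact ge_of_tendsto' hlim hnn
      · intro hxb
        have hxb' : ubar x = ub x := by
          rw [h3, h2]; exact hxb
        have hnn : ∀ i, hs (ns i) x ≤ 0 := by
          intro i
          have h5 := (hx (ns i)).2
          rw [hxb'] at h5
          by_contra hcon
          push_neg at hcon
          nlinarith [ht_pos (ns i)]
        exact le_of_tendsto' hlim hnn
      · rintro ⟨hxa, hxb⟩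
        have : ua x = ub x := by
          rw [h1, h2, ← hxa, ← hxb]
        linarith
    have hpt : ∀ᵐ x ∂μ, ‖Set.indicator (Aa ∪ Ab) (fun _ => (1:ℝ)) x‖ ≤ ‖(h - g) x‖ := by
      filter_upwards [key] with x hk
      obtain ⟨hka, hkb, hknot⟩ := hk
      simp only [Pi.sub_apply, Real.norm_eq_abs]
      by_cases hxa : x ∈ Aa
      · have hxb : x ∉ Ab := fun hxb => hknot ⟨hxa, hxb⟩
        have hgx : g x = -1 := by
          simp [hgdef, Set.indicator_of_mem hxa, Set.indicator_of_notMem hxb]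
        rw [Set.indicator_of_mem (Set.mem_union_left _ hxa), hgx]
        have h0 := hka hxa
        rw [abs_one, abs_of_nonneg (by linarith : (0:ℝ) ≤ h x - (-1))]
        linarith
      · by_cases hxb : x ∈ Ab
        · have hgx : g x = 1 := by
            simp [hgdef, Set.indicator_of_mem hxb, Set.indicator_of_notMem hxa]
          rw [Set.indicator_of_mem (Set.mem_union_right _ hxb), hgx]
          have h0 := hkb hxb
          rw [abs_one, abs_of_nonpos (by linarith : h x - 1 ≤ 0)]
          linarith
        · rw [Set.indicator_of_notMem (by simp [hxa, hxb])]
          simp [abs_nonneg]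
    have hlow : eLpNorm (Set.indicator (Aa ∪ Ab) (fun _ => (1:ℝ))) 2 μ ≤ eLpNorm (h - g) 2 μ :=
      eLpNorm_mono_ae hpt
    rw [eLpNorm_indicator_const (hAa_meas.union hAb_meas) two_ne_zero ENNReal.ofNat_ne_top] at hlow
    simp only [nnnorm_one, enorm_one, ENNReal.coe_one, one_mul, ENNReal.toReal_ofNat] at hlow
    have hge : ENNReal.ofReal δ ≤ μ (Aa ∪ Ab) ^ (1/2 : ℝ) := by
      have ha1 : ENNReal.ofReal δ ≤ 1 := by
        rw [← ENNReal.ofReal_one]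
        exact ENNReal.ofReal_le_ofReal (min_le_left _ _)
      have ha2 : ENNReal.ofReal δ ≤ μ (Aa ∪ Ab) := by
        calc ENNReal.ofReal δ ≤ ENNReal.ofReal (μ A).toReal :=
              ENNReal.ofReal_le_ofReal (min_le_right _ _)
          _ = μ A := ENNReal.ofReal_toReal (measure_ne_top μ A)
          _ = μ (Aa ∪ Ab) := hAeq.symm
      calc ENNReal.ofReal δ = (ENNReal.ofReal δ) ^ (1:ℝ) := (ENNReal.rpow_one _).symm
        _ ≤ (ENNReal.ofReal δ) ^ (1/2:ℝ) :=
            ENNReal.rpow_le_rpow_of_exponent_ge ha1 (by norm_num)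
        _ ≤ (μ (Aa ∪ Ab)) ^ (1/2:ℝ) := ENNReal.rpow_le_rpow ha2 (by norm_num)
    exact absurd (lt_of_lt_of_le hclose (hge.trans hlow)) (lt_irrefl _)
  · -- active set null ⇒ density
    intro hA0 g hg δ hδ
    obtain ⟨s, hsg, hs_mem⟩ := hg.exists_simpleFunc_eLpNorm_sub_lt ENNReal.ofNat_ne_top
      (show ENNReal.ofReal (δ/2) ≠ 0 by simp only [ne_eq, ENNReal.ofReal_eq_zero, not_le]; linarith)
    obtain ⟨C, hC⟩ := s.exists_forall_norm_le
    set M : ℝ := max C 1 with hMdef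
    have hM1 : (1:ℝ) ≤ M := le_max_right _ _
    have hM0 : (0:ℝ) < M := lt_of_lt_of_le one_pos hM1
    have hsM : ∀ x, |s x| ≤ M := fun x => le_trans (hC x) (le_max_left _ _)
    set F : ℕ → Set (Fin d → ℝ) :=
      fun n => {x | fu x < fa x + 1/((n:ℝ)+1) ∨ fb x - 1/((n:ℝ)+1) < fu x} with hFdef
    have hF_meas : ∀ n, MeasurableSet (F n) := by
      intro n
      apply MeasurableSet.union
      · exact measurableSet_lt hfu_sm.measurable (hfa_sm.measurable.add measurable_const)
      · exact measurableSet_lt (hfb_sm.measurable.sub measurable_const) hfu_sm.measurable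
    have hF_anti : Antitone F := by
      intro m n hmn x hx
      have hle : 1/((n:ℝ)+1) ≤ 1/((m:ℝ)+1) := by
        apply one_div_le_one_div_of_le
        · positivity
        · have : (m:ℝ) ≤ n := Nat.cast_le.mpr hmn
          linarith
      simp only [hFdef, Set.mem_setOf_eq] at hx ⊢
      rcases hx with hx | hx
      · left; linarith
      · right; linarith
    have hbadnull : μ {x | fu x ≤ fa x ∨ fb x ≤ fu x} = 0 := by
      rw [measure_eq_zero_iff_ae_notMem]
      filter_upwards [measure_eq_zero_iff_ae_notMem.mp hA0, hfa_eq, hfb_eq, hfu_eq, hubar_box, hab]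
        with x hx h1 h2 h3 hbx hlt
      have hx' : ¬(ubar x = ua x ∨ ubar x = ub x) := hx
      push_neg at hx'
      simp only [Set.mem_setOf_eq, not_or, not_le]
      rw [← h1, ← h2, ← h3]
      exact ⟨lt_of_le_of_ne hbx.1 (fun e => hx'.1 e.symm), lt_of_le_of_ne hbx.2 hx'.2⟩
    have hInull : μ (⋂ n, F n) = 0 := by
      apply measure_mono_null _ hbadnull
      intro x hx
      simp only [Set.mem_iInter] at hx
      show fu x ≤ fa x ∨ fb x ≤ fu x
      set m : ℝ := min (fu x - fa x) (fb x - fu x) with hmdef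
      have hm0 : m ≤ 0 := by
        by_contra hm
        push_neg at hm
        obtain ⟨n, hn⟩ := exists_nat_one_div_lt hm
        have := hx n
        simp only [hFdef, Set.mem_setOf_eq] at this
        rcases this with h' | h'
        · have : m ≤ fu x - fa x := min_le_left _ _
          linarith
        · have : m ≤ fb x - fu x := min_le_right _ _
          linarith
      rcases min_le_iff.mp hm0 with h' | h'
      · left; linarith
      · right; linarith
    have htend : Tendsto (fun n => μ (F n)) atTop (nhds 0) := by
      have := tendsto_measure_iInter_atTop (μ := μ)
        (fun n => (hF_meas n).nullMeasurableSet) hF_anti ⟨0, measure_ne_top μ _⟩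
      rw [hInull] at this
      exact this
    set c : ℝ≥0∞ := ENNReal.ofReal (δ/2) / ENNReal.ofReal M with hcdef
    have hc0 : 0 < c := ENNReal.div_pos
      (by simp only [ne_eq, ENNReal.ofReal_eq_zero, not_le]; linarith) ENNReal.ofReal_ne_top
    have hct : c ≠ ⊤ := by
      refine (ENNReal.div_lt_top ENNReal.ofReal_ne_top ?_).ne
      simp only [ne_eq, ENNReal.ofReal_eq_zero, not_le]
      linarith
    have hε0 : (0:ℝ≥0∞) < c ^ (2:ℝ) := ENNReal.rpow_pos hc0 hct
    obtain ⟨N, hN⟩ := (htend.eventually (eventually_lt_nhds hε0)).exists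
    set h : (Fin d → ℝ) → ℝ := Set.indicator (F N)ᶜ s with hhdef
    have hs_mem_p : MemLp (⇑s) (ENNReal.ofReal p) μ :=
      MemLp.of_bound s.aestronglyMeasurable M (ae_of_all _ hsM)
    have hh_mem : MemLp h (ENNReal.ofReal p) μ := hs_mem_p.indicator (hF_meas N).compl
    set t : ℕ → ℝ := fun n => (1/(((N:ℝ)+1) * M)) * (1/((n:ℝ)+1)) with htdef
    have ht_pos : ∀ n, 0 < t n := by
      intro n
      apply mul_pos
      · positivity
      · positivity
    refine ⟨h, ⟨hh_mem, t, fun _ => h, ht_pos, ?_, ?_, ?_⟩, ?_⟩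
    · -- t → 0
      have h0 : Tendsto (fun n : ℕ => (1:ℝ)/((n:ℝ)+1)) atTop (nhds 0) :=
        tendsto_one_div_add_atTop_nhds_zero_nat
      have h1 := h0.const_mul (1/(((N:ℝ)+1) * M))
      rw [mul_zero] at h1
      exact h1
    · -- constant sequence
      have : (fun n : ℕ => eLpNorm ((fun _ => h) n - h) (ENNReal.ofReal p) μ) = fun _ => 0 := by
        funext n
        simp [sub_self]
      rw [this]
      exact tendsto_const_nhds
    · -- box constraints
      intro n
      constructor
      · exact hubar_mem.add ((hh_mem.const_mul (t n)))
      · filter_upwards [hfa_eq, hfb_eq, hfu_eq, hubar_box] with x h1 h2 h3 hbx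
        by_cases hx : x ∈ F N
        · have : h x = 0 := Set.indicator_of_notMem (by simpa using hx) s
          rw [this]
          simpa using hbx
        · have hhx : h x = s x := Set.indicator_of_mem (by simpa using hx) s
          simp only [hFdef, Set.mem_setOf_eq, not_or, not_lt] at hx
          have hgap1 : ua x + 1/((N:ℝ)+1) ≤ ubar x := by
            rw [h1, h3]; exact hx.1
          have hgap2 : ubar x ≤ ub x - 1/((N:ℝ)+1) := by
            rw [h2, h3]; exact hx.2
          have htb : t n * M ≤ 1/((N:ℝ)+1) := by
            have e1 : t n * M = (1/(((N:ℝ)+1))) * (1/((n:ℝ)+1)) := by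
              rw [htdef]
              field_simp
            rw [e1]
            have h2' : 1/((n:ℝ)+1) ≤ 1 := by
              rw [div_le_one (by positivity)]
              simp
            have h3' : (0:ℝ) < 1/((N:ℝ)+1) := by positivity
            nlinarith
          have habs : |t n * h x| ≤ 1/((N:ℝ)+1) := by
            rw [hhx, abs_mul, abs_of_pos (ht_pos n)]
            calc t n * |s x| ≤ t n * M :=
                  mul_le_mul_of_nonneg_left (hsM x) (ht_pos n).le
              _ ≤ 1/((N:ℝ)+1) := htb
          obtain ⟨hl, hr⟩ := abs_le.mp habs
          constructor <;> linarith
    · -- closeness in L²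
      have hh_meas2 : AEStronglyMeasurable h μ :=
        (s.aestronglyMeasurable.indicator (hF_meas N).compl)
      have tri : eLpNorm (h - g) 2 μ ≤ eLpNorm (h - ⇑s) 2 μ + eLpNorm (⇑s - g) 2 μ := by
        have e : (h - g) = (h - ⇑s) + (⇑s - g) := by
          funext x
          simp only [Pi.add_apply, Pi.sub_apply]
          ring
        rw [e]
        exact eLpNorm_add_le (hh_meas2.sub s.aestronglyMeasurable)
          (s.aestronglyMeasurable.sub hg.1) one_le_two
      have hbound : eLpNorm (h - ⇑s) 2 μ ≤ ENNReal.ofReal M * μ (F N) ^ (1/2 : ℝ) := by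
        have hptw : ∀ x, ‖(h - ⇑s) x‖ ≤ ‖Set.indicator (F N) (fun _ => M) x‖ := by
          intro x
          simp only [Pi.sub_apply, Real.norm_eq_abs]
          by_cases hx : x ∈ F N
          · have hx' : x ∉ (F N)ᶜ := by simp [hx]
            rw [hhdef, Set.indicator_of_notMem hx', Set.indicator_of_mem hx]
            rw [abs_of_pos hM0, zero_sub, abs_neg]
            exact hsM x
          · have hx' : x ∈ (F N)ᶜ := hx
            rw [hhdef, Set.indicator_of_mem hx', Set.indicator_of_notMem hx]
            simp
        calc eLpNorm (h - ⇑s) 2 μ ≤ eLpNorm (Set.indicator (F N) (fun _ => M)) 2 μ :=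
              eLpNorm_mono hptw
          _ = ‖M‖ₑ * μ (F N) ^ (1 / (2:ℝ≥0∞).toReal) :=
              eLpNorm_indicator_const (hF_meas N) two_ne_zero ENNReal.ofNat_ne_top
          _ = ENNReal.ofReal M * μ (F N) ^ (1/2 : ℝ) := by
              rw [← Real.enorm_eq_ofReal hM0.le]
              norm_num
      have hc2 : μ (F N) ^ (1/2 : ℝ) ≤ c := by
        have : μ (F N) ^ (1/2 : ℝ) ≤ (c ^ (2:ℝ)) ^ (1/2 : ℝ) :=
          ENNReal.rpow_le_rpow hN.le (by norm_num)
        rwa [← ENNReal.rpow_mul, show (2:ℝ) * (1/2) = 1 by norm_num, ENNReal.rpow_one] at this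
      have hfirst : eLpNorm (h - ⇑s) 2 μ ≤ ENNReal.ofReal (δ/2) := by
        calc eLpNorm (h - ⇑s) 2 μ ≤ ENNReal.ofReal M * μ (F N) ^ (1/2 : ℝ) := hbound
          _ ≤ ENNReal.ofReal M * c := mul_le_mul_right hc2 _
          _ = ENNReal.ofReal (δ/2) := by
              rw [hcdef]
              exact ENNReal.mul_div_cancel
                (by simp only [ne_eq, ENNReal.ofReal_eq_zero, not_le]; linarith)
                ENNReal.ofReal_ne_top
      have hsecond : eLpNorm (⇑s - g) 2 μ < ENNReal.ofReal (δ/2) := by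
        rw [eLpNorm_sub_comm]
        exact hsg
      calc eLpNorm (h - g) 2 μ ≤ eLpNorm (h - ⇑s) 2 μ + eLpNorm (⇑s - g) 2 μ := tri
        _ < ENNReal.ofReal (δ/2) + ENNReal.ofReal (δ/2) :=
            ENNReal.add_lt_add_of_le_of_lt (lt_of_le_of_lt hfirst ENNReal.ofReal_lt_top).ne hfirst hsecond
        _ = ENNReal.ofReal δ := by
            rw [← ENNReal.ofReal_add (by linarith) (by linarith)]
            norm_num
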